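/- Let K be a field and q a positive integer. Let a, b, c, d ∈ K be pairwise distinct and pairwise non-conjugate (i.e., for every two distinct elements x, y among a, b, c, d one has y ≠ x^q). Then the four vectors w(y) = (1, y^{q+1}, y^{2(q+1)}, y^{3(q+1)}, y^q + y, (y^q + y)², (y^q + y)³, y^{2q+1} + y^{q+2}) ∈ K⁸, for y = a, b, c, d, are linearly independent over K. -/
import Mathlib

section Aux

variable {K : Type*} [Field K]

private lemma vand4 (c1 c2 c3 c4 t1 t2 t3 t4 : K)
    (E0 : c1 + c2 + c3 + c4 = 0)
    (E4 : c1*t1 + c2*t2 + c3*t3 + c4*t4 = 0)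
    (E5 : c1*t1^2 + c2*t2^2 + c3*t3^2 + c4*t4^2 = 0)
    (E6 : c1*t1^3 + c2*t2^3 + c3*t3^3 + c4*t4^3 = 0)
    (h2 : t2 ≠ t1) (h3 : t3 ≠ t1) (h4 : t4 ≠ t1) : c1 = 0 := by
  have h : c1 * ((t1 - t2) * ((t1 - t3) * (t1 - t4))) = 0 := by
    linear_combination E6 - (t2+t3+t4)*E5 + (t2*t3+t2*t4+t3*t4)*E4 - (t2*t3*t4)*E0
  have hne : (t1 - t2) * ((t1 - t3) * (t1 - t4)) ≠ 0 :=
    mul_ne_zero (sub_ne_zero_of_ne h2.symm)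
      (mul_ne_zero (sub_ne_zero_of_ne h3.symm) (sub_ne_zero_of_ne h4.symm))
  exact (mul_eq_zero.mp h).resolve_right hne

private lemma keyC (c1 c2 c3 c4 t1 t3 t4 n1 n2 n4 : K)
    (E0 : c1 + c2 + c3 + c4 = 0)
    (E1 : c1*n1 + c2*n2 + c3*n1 + c4*n4 = 0)
    (E2 : c1*n1^2 + c2*n2^2 + c3*n1^2 + c4*n4^2 = 0)
    (E4 : c1*t1 + c2*t1 + c3*t3 + c4*t4 = 0)
    (E5 : c1*t1^2 + c2*t1^2 + c3*t3^2 + c4*t4^2 = 0)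
    (E7 : c1*n1*t1 + c2*n2*t1 + c3*n1*t3 + c4*n4*t4 = 0)
    (hn2 : n2 ≠ n1) (ht3 : t3 ≠ t1)
    (hp4 : t4 = t1 → n4 ≠ n1) : c1 = 0 := by
  have hx : (t1 - t3) * (n1 - n2) ≠ 0 :=
    mul_ne_zero (sub_ne_zero_of_ne ht3.symm) (sub_ne_zero_of_ne hn2.symm)
  by_cases h1 : t4 = t3
  · have h : c1 * ((t1 - t3) * (n1 - n2)) = 0 := by
      linear_combination E7 - n2*E4 - t3*E1 + t3*n2*E0 - c4*(n4-n2)*h1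
    exact (mul_eq_zero.mp h).resolve_right hx
  by_cases h2 : n4 = n2
  · have h : c1 * ((t1 - t3) * (n1 - n2)) = 0 := by
      linear_combination E7 - n2*E4 - t3*E1 + t3*n2*E0 - c4*(t4-t3)*h2
    exact (mul_eq_zero.mp h).resolve_right hx
  by_cases h3 : t4 = t1
  · have hn4 : n4 ≠ n1 := hp4 h3
    have h : c1 * ((t3 - t1) * ((n1 - n2) * (n1 - n4))) = 0 := by
      linear_combination (t3 - t1)*E2 - (t3 - t1)*(n2 + n4)*E1 + (t3 - t1)*n2*n4*E0
        - (n1 - n2)*(n1 - n4)*E4 + (n1 - n2)*(n1 - n4)*t1*E0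
        + c4*(n1 - n2)*(n1 - n4)*h3
    exact (mul_eq_zero.mp h).resolve_right
      (mul_ne_zero (sub_ne_zero_of_ne ht3)
        (mul_ne_zero (sub_ne_zero_of_ne hn2.symm) (sub_ne_zero_of_ne hn4.symm)))
  by_cases h4 : n4 = n1
  · have h : c1 * ((n2 - n1) * ((t1 - t3) * (t1 - t4))) = 0 := by
      linear_combination (n2 - n1)*(E5 - (t3 + t4)*E4 + t3*t4*E0)
        - (t1 - t3)*(t1 - t4)*(E1 - n1*E0)
        + c4*(t1 - t3)*(t1 - t4)*h4
    exact (mul_eq_zero.mp h).resolve_right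
      (mul_ne_zero (sub_ne_zero_of_ne hn2)
        (mul_ne_zero (sub_ne_zero_of_ne ht3.symm) (sub_ne_zero_of_ne fun e => h3 e.symm)))
  · have h : c1 * ((t4 - t1) * ((n4 - n1) * ((t1 - t3) * (n1 - n2)))) = 0 := by
      linear_combination ((t4 - t1)*(n4 - n1) - (t4 - t3)*(n4 - n2))*E7
        + (-(t4 - t1)*(n4 - n1)*n2 + (t4 - t3)*(n4 - n2)*n1)*E4
        + (-(t4 - t1)*(n4 - n1)*t3 + (t4 - t3)*(n4 - n2)*t1)*E1
        + ((t4 - t1)*(n4 - n1)*t3*n2 - (t4 - t3)*(n4 - n2)*t1*n1)*E0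
    exact (mul_eq_zero.mp h).resolve_right
      (mul_ne_zero (sub_ne_zero_of_ne h3)
        (mul_ne_zero (sub_ne_zero_of_ne h4) hx))

private lemma key1 (c1 c2 c3 c4 t1 t2 t3 t4 n1 n2 n3 n4 : K)
    (E0 : c1 + c2 + c3 + c4 = 0)
    (E1 : c1*n1 + c2*n2 + c3*n3 + c4*n4 = 0)
    (E2 : c1*n1^2 + c2*n2^2 + c3*n3^2 + c4*n4^2 = 0)
    (E3 : c1*n1^3 + c2*n2^3 + c3*n3^3 + c4*n4^3 = 0)
    (E4 : c1*t1 + c2*t2 + c3*t3 + c4*t4 = 0)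
    (E5 : c1*t1^2 + c2*t2^2 + c3*t3^2 + c4*t4^2 = 0)
    (E6 : c1*t1^3 + c2*t2^3 + c3*t3^3 + c4*t4^3 = 0)
    (E7 : c1*n1*t1 + c2*n2*t2 + c3*n3*t3 + c4*n4*t4 = 0)
    (d2 : t2 = t1 → n2 ≠ n1) (d3 : t3 = t1 → n3 ≠ n1) (d4 : t4 = t1 → n4 ≠ n1) :
    c1 = 0 := by
  by_cases h2t : t2 = t1
  · have hn2 : n2 ≠ n1 := d2 h2t
    by_cases h3n : n3 = n1
    · exact keyC c1 c2 c3 c4 t1 t3 t4 n1 n2 n4 E0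
        (by linear_combination E1 - c3*h3n)
        (by linear_combination E2 - c3*(n3+n1)*h3n)
        (by linear_combination E4 - c2*h2t)
        (by linear_combination E5 - c2*(t2+t1)*h2t)
        (by linear_combination E7 - c2*n2*h2t - c3*t3*h3n)
        hn2 (fun e => d3 e h3n) d4
    by_cases h4n : n4 = n1
    · exact keyC c1 c2 c4 c3 t1 t4 t3 n1 n2 n3
        (by linear_combination E0)
        (by linear_combination E1 - c4*h4n)
        (by linear_combination E2 - c4*(n4+n1)*h4n)
        (by linear_combination E4 - c2*h2t)
        (by linear_combination E5 - c2*(t2+t1)*h2t)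
        (by linear_combination E7 - c2*n2*h2t - c4*t4*h4n)
        hn2 (fun e => d4 e h4n) (fun _ => h3n)
    · exact vand4 c1 c2 c3 c4 n1 n2 n3 n4 E0 E1 E2 E3 hn2 h3n h4n
  by_cases h3t : t3 = t1
  · have hn3 : n3 ≠ n1 := d3 h3t
    by_cases h2n : n2 = n1
    · exact keyC c1 c3 c2 c4 t1 t2 t4 n1 n3 n4
        (by linear_combination E0)
        (by linear_combination E1 - c2*h2n)
        (by linear_combination E2 - c2*(n2+n1)*h2n)
        (by linear_combination E4 - c3*h3t)
        (by linear_combination E5 - c3*(t3+t1)*h3t)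
        (by linear_combination E7 - c3*n3*h3t - c2*t2*h2n)
        hn3 (fun e => d2 e h2n) d4
    by_cases h4n : n4 = n1
    · exact keyC c1 c3 c4 c2 t1 t4 t2 n1 n3 n2
        (by linear_combination E0)
        (by linear_combination E1 - c4*h4n)
        (by linear_combination E2 - c4*(n4+n1)*h4n)
        (by linear_combination E4 - c3*h3t)
        (by linear_combination E5 - c3*(t3+t1)*h3t)
        (by linear_combination E7 - c3*n3*h3t - c4*t4*h4n)
        hn3 (fun e => d4 e h4n) (fun e => absurd e h2t)
    · exact vand4 c1 c2 c3 c4 n1 n2 n3 n4 E0 E1 E2 E3 h2n hn3 h4n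
  by_cases h4t : t4 = t1
  · have hn4 : n4 ≠ n1 := d4 h4t
    by_cases h2n : n2 = n1
    · exact keyC c1 c4 c2 c3 t1 t2 t3 n1 n4 n3
        (by linear_combination E0)
        (by linear_combination E1 - c2*h2n)
        (by linear_combination E2 - c2*(n2+n1)*h2n)
        (by linear_combination E4 - c4*h4t)
        (by linear_combination E5 - c4*(t4+t1)*h4t)
        (by linear_combination E7 - c4*n4*h4t - c2*t2*h2n)
        hn4 (fun e => d2 e h2n) (fun e => absurd e h3t)
    by_cases h3n : n3 = n1
    · exact keyC c1 c4 c3 c2 t1 t3 t2 n1 n4 n2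
        (by linear_combination E0)
        (by linear_combination E1 - c3*h3n)
        (by linear_combination E2 - c3*(n3+n1)*h3n)
        (by linear_combination E4 - c4*h4t)
        (by linear_combination E5 - c4*(t4+t1)*h4t)
        (by linear_combination E7 - c4*n4*h4t - c3*t3*h3n)
        hn4 h3t (fun e => absurd e h2t)
    · exact vand4 c1 c2 c3 c4 n1 n2 n3 n4 E0 E1 E2 E3 h2n h3n hn4
  · exact vand4 c1 c2 c3 c4 t1 t2 t3 t4 E0 E4 E5 E6 h2t h3t h4t

end Aux

/-- The vector
`(1, y^{q+1}, y^{2(q+1)}, y^{3(q+1)}, y^q + y, (y^q + y)², (y^q + y)³, y^{2q+1} + y^{q+2}) ∈ K⁸`. -/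
def traceNormVec8 (K : Type*) [Field K] (q : ℕ) (y : K) : Fin 8 → K :=
  ![1, y ^ (q + 1), y ^ (2 * (q + 1)), y ^ (3 * (q + 1)),
    y ^ q + y, (y ^ q + y) ^ 2, (y ^ q + y) ^ 3, y ^ (2 * q + 1) + y ^ (q + 2)]

/-- Let `K` be a field and `q` a positive integer.  If `a, b, c, d ∈ K` are pairwise
distinct and pairwise non-conjugate, then the four vectors
`(1, y^{q+1}, y^{2(q+1)}, y^{3(q+1)}, y^q + y, (y^q + y)², (y^q + y)³, y^{2q+1} + y^{q+2})`,
for `y = a, b, c, d`, are linearly independent over `K`. -/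
theorem statement10 (K : Type*) [Field K] (q : ℕ) (hq : 0 < q) (β : Fin 4 → K)
    (hdist : ∀ i j, i ≠ j → β i ≠ β j)
    (hconj : ∀ i j, i ≠ j → β j ≠ β i ^ q) :
    LinearIndependent K (fun i => traceNormVec8 K q (β i)) := by
  rw [Fintype.linearIndependent_iff]
  intro g hg
  -- pairwise distinctness of the trace/norm pairs
  have d : ∀ i j : Fin 4, i ≠ j →
      (β j ^ q + β j = β i ^ q + β i → β j ^ (q+1) ≠ β i ^ (q+1)) := by
    intro i j hij ht hn
    have h : (β j - β i) * (β j - β i ^ q) = 0 := by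
      linear_combination (β j) * ht - hn
    rcases mul_eq_zero.mp h with h | h
    · exact hdist j i (fun e => hij e.symm) (sub_eq_zero.mp h)
    · exact hconj i j hij (sub_eq_zero.mp h)
  -- the eight coordinate equations
  have E0 : g 0 + g 1 + g 2 + g 3 = 0 := by
    simpa [traceNormVec8, Fin.sum_univ_four] using congrFun hg (0 : Fin 8)
  have E1 : g 0 * β 0 ^ (q+1) + g 1 * β 1 ^ (q+1) + g 2 * β 2 ^ (q+1)
      + g 3 * β 3 ^ (q+1) = 0 := by
    simpa [traceNormVec8, Fin.sum_univ_four] using congrFun hg (1 : Fin 8)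
  have E2 : g 0 * β 0 ^ (2*(q+1)) + g 1 * β 1 ^ (2*(q+1)) + g 2 * β 2 ^ (2*(q+1))
      + g 3 * β 3 ^ (2*(q+1)) = 0 := by
    simpa [traceNormVec8, Fin.sum_univ_four] using congrFun hg (2 : Fin 8)
  have E3 : g 0 * β 0 ^ (3*(q+1)) + g 1 * β 1 ^ (3*(q+1)) + g 2 * β 2 ^ (3*(q+1))
      + g 3 * β 3 ^ (3*(q+1)) = 0 := by
    simpa [traceNormVec8, Fin.sum_univ_four] using congrFun hg (3 : Fin 8)
  have E4 : g 0 * (β 0 ^ q + β 0) + g 1 * (β 1 ^ q + β 1) + g 2 * (β 2 ^ q + β 2)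
      + g 3 * (β 3 ^ q + β 3) = 0 := by
    simpa [traceNormVec8, Fin.sum_univ_four] using congrFun hg (4 : Fin 8)
  have E5 : g 0 * (β 0 ^ q + β 0) ^ 2 + g 1 * (β 1 ^ q + β 1) ^ 2
      + g 2 * (β 2 ^ q + β 2) ^ 2 + g 3 * (β 3 ^ q + β 3) ^ 2 = 0 := by
    simpa [traceNormVec8, Fin.sum_univ_four] using congrFun hg (5 : Fin 8)
  have E6 : g 0 * (β 0 ^ q + β 0) ^ 3 + g 1 * (β 1 ^ q + β 1) ^ 3
      + g 2 * (β 2 ^ q + β 2) ^ 3 + g 3 * (β 3 ^ q + β 3) ^ 3 = 0 := by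
    simpa [traceNormVec8, Fin.sum_univ_four] using congrFun hg (6 : Fin 8)
  have E7 : g 0 * (β 0 ^ (2*q+1) + β 0 ^ (q+2)) + g 1 * (β 1 ^ (2*q+1) + β 1 ^ (q+2))
      + g 2 * (β 2 ^ (2*q+1) + β 2 ^ (q+2))
      + g 3 * (β 3 ^ (2*q+1) + β 3 ^ (q+2)) = 0 := by
    simpa [traceNormVec8, Fin.sum_univ_four] using congrFun hg (7 : Fin 8)
  intro i
  fin_cases i
  · exact key1 (g 0) (g 1) (g 2) (g 3)
      (β 0 ^ q + β 0) (β 1 ^ q + β 1) (β 2 ^ q + β 2) (β 3 ^ q + β 3)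
      (β 0 ^ (q+1)) (β 1 ^ (q+1)) (β 2 ^ (q+1)) (β 3 ^ (q+1))
      (by linear_combination E0) (by linear_combination E1) (by linear_combination E2)
      (by linear_combination E3) (by linear_combination E4) (by linear_combination E5)
      (by linear_combination E6) (by linear_combination E7)
      (d 0 1 (by decide)) (d 0 2 (by decide)) (d 0 3 (by decide))
  · exact key1 (g 1) (g 0) (g 2) (g 3)
      (β 1 ^ q + β 1) (β 0 ^ q + β 0) (β 2 ^ q + β 2) (β 3 ^ q + β 3)
      (β 1 ^ (q+1)) (β 0 ^ (q+1)) (β 2 ^ (q+1)) (β 3 ^ (q+1))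
      (by linear_combination E0) (by linear_combination E1) (by linear_combination E2)
      (by linear_combination E3) (by linear_combination E4) (by linear_combination E5)
      (by linear_combination E6) (by linear_combination E7)
      (d 1 0 (by decide)) (d 1 2 (by decide)) (d 1 3 (by decide))
  · exact key1 (g 2) (g 0) (g 1) (g 3)
      (β 2 ^ q + β 2) (β 0 ^ q + β 0) (β 1 ^ q + β 1) (β 3 ^ q + β 3)
      (β 2 ^ (q+1)) (β 0 ^ (q+1)) (β 1 ^ (q+1)) (β 3 ^ (q+1))
      (by linear_combination E0) (by linear_combination E1) (by linear_combination E2)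
      (by linear_combination E3) (by linear_combination E4) (by linear_combination E5)
      (by linear_combination E6) (by linear_combination E7)
      (d 2 0 (by decide)) (d 2 1 (by decide)) (d 2 3 (by decide))
  · exact key1 (g 3) (g 0) (g 1) (g 2)
      (β 3 ^ q + β 3) (β 0 ^ q + β 0) (β 1 ^ q + β 1) (β 2 ^ q + β 2)
      (β 3 ^ (q+1)) (β 0 ^ (q+1)) (β 1 ^ (q+1)) (β 2 ^ (q+1))
      (by linear_combination E0) (by linear_combination E1) (by linear_combination E2)
      (by linear_combination E3) (by linear_combination E4) (by linear_combination E5)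
      (by linear_combination E6) (by linear_combination E7)
      (d 3 0 (by decide)) (d 3 1 (by decide)) (d 3 2 (by decide))
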